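/- Fix a volume form vol : ⋀⁶ℂ⁶ ≅ ℂ and let (α,β) := vol(α∧β) on ⋀³ℂ⁶. Let T be a complete family of pairwise incident planes in ℂ⁶ (any two members of T intersect nontrivially, and every 3-dimensional subspace of ℂ⁶ intersecting all members of T nontrivially belongs to T). Then there exists a Lagrangian subspace A ⊆ ⋀³ℂ⁶ (isotropic of dimension 10) such that Θ_A = T. -/

import Mathlib

open ExteriorAlgebra Submodule Module

set_option maxRecDepth 10000
set_option linter.unusedSectionVars false

noncomputable section

variable {V : Type*} [AddCommGroup V] [Module ℂ V]

lemma ι_mem_one (w : V) : ι ℂ w ∈ ⋀[ℂ]^1 V := by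
  rw [exteriorPower, pow_one]; exact LinearMap.mem_range_self _ w

lemma wedge3_mem (w₁ w₂ w₃ : V) : ι ℂ w₁ * ι ℂ w₂ * ι ℂ w₃ ∈ ⋀[ℂ]^3 V :=
  SetLike.mul_mem_graded (SetLike.mul_mem_graded (ι_mem_one w₁) (ι_mem_one w₂)) (ι_mem_one w₃)

/-- `w₁ ∧ w₂ ∧ w₃` as an element of `⋀³V`. -/
def wedge3 (w₁ w₂ w₃ : V) : ⋀[ℂ]^3 V :=
  ⟨ι ℂ w₁ * ι ℂ w₂ * ι ℂ w₃, wedge3_mem w₁ w₂ w₃⟩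

lemma mul_mem_six (α β : ⋀[ℂ]^3 V) :
    (α : ExteriorAlgebra ℂ V) * (β : ExteriorAlgebra ℂ V) ∈ ⋀[ℂ]^6 V :=
  SetLike.mul_mem_graded α.2 β.2

/-- The bilinear form `(α, β) := vol (α ∧ β)` on `⋀³V` induced by a volume form
`vol : ⋀⁶V ≅ ℂ`. -/
def symForm (vol : (⋀[ℂ]^6 V) ≃ₗ[ℂ] ℂ) (α β : ⋀[ℂ]^3 V) : ℂ :=
  vol ⟨(α : ExteriorAlgebra ℂ V) * (β : ExteriorAlgebra ℂ V), mul_mem_six α β⟩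

/-- `Θ_A`: the set of 3-dimensional subspaces `W ⊆ V` with `⋀³W ⊆ A`. -/
def Theta (A : Submodule ℂ (⋀[ℂ]^3 V)) : Set (Submodule ℂ V) :=
  {W | finrank ℂ W = 3 ∧ ∀ w₁ ∈ W, ∀ w₂ ∈ W, ∀ w₃ ∈ W, wedge3 w₁ w₂ w₃ ∈ A}

def detF {k : ℕ} (σ : Fin k → Fin 6) : (Fin 6 → ℂ) [⋀^Fin k]→ₗ[ℂ] ℂ :=
  (Matrix.detRowAlternating).compLinearMap (LinearMap.funLeft ℂ ℂ σ)
lemma detF_apply {k : ℕ} (σ : Fin k → Fin 6) (v : Fin k → (Fin 6 → ℂ)) :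
    detF σ v = Matrix.det (Matrix.of (fun a b => v a (σ b))) := rfl
def liftF {k : ℕ} (σ : Fin k → Fin 6) : ExteriorAlgebra ℂ (Fin 6 → ℂ) →ₗ[ℂ] ℂ :=
  liftAlternating (Function.update (fun _ => 0) k (detF σ))
lemma liftF_apply {k : ℕ} (σ : Fin k → Fin 6) (v : Fin k → (Fin 6 → ℂ)) :
    liftF σ (ιMulti ℂ k v) = Matrix.det (Matrix.of (fun a b => v a (σ b))) := by
  rw [liftF, liftAlternating_apply_ιMulti, Function.update_self, detF_apply]

-- index type
abbrev I3 := {s : Finset (Fin 6) // s.card = 3}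

def bV : Basis (Fin 6) ℂ (Fin 6 → ℂ) := Pi.basisFun ℂ (Fin 6)

def sig (s : I3) : Fin 3 → Fin 6 := fun i => s.1.orderEmbOfFin s.2 i

lemma sig_mem (s : I3) (i : Fin 3) : sig s i ∈ s.1 := Finset.orderEmbOfFin_mem _ _ _

lemma sig_inj (s : I3) : Function.Injective (sig s) := (Finset.orderEmbOfFin s.1 s.2).injective

def eAlg (s : I3) : ExteriorAlgebra ℂ (Fin 6 → ℂ) := ιMulti ℂ 3 (fun i => bV (sig s i))

lemma bV_apply (i j : Fin 6) : bV i j = if i = j then 1 else 0 := by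
  simp only [bV, Pi.basisFun_apply, Pi.single_apply]
  simp [eq_comm]

lemma liftF_eAlg_diag (s : I3) : liftF (sig s) (eAlg s) = 1 := by
  rw [eAlg, liftF_apply]
  have : (Matrix.of fun a b => bV (sig s a) (sig s b)) = (1 : Matrix (Fin 3) (Fin 3) ℂ) := by
    ext a b
    simp [bV_apply, Matrix.one_apply, (sig_inj s).eq_iff]
  rw [this, Matrix.det_one]

lemma liftF_eAlg_off {s t : I3} (h : s ≠ t) : liftF (sig s) (eAlg t) = 0 := by
  rw [eAlg, liftF_apply]
  have hts : ¬ t.1 ⊆ s.1 := by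
    intro hsub
    exact h (Subtype.ext (Finset.eq_of_subset_of_card_le hsub (by omega)).symm)
  obtain ⟨x, hxt, hxs⟩ := Finset.not_subset.mp hts
  set a : Fin 3 := (t.1.orderIsoOfFin t.2).symm ⟨x, hxt⟩ with ha
  have hta : sig t a = x := by
    have := (t.1.orderIsoOfFin t.2).apply_symm_apply ⟨x, hxt⟩
    have h2 : (↑((t.1.orderIsoOfFin t.2) a) : Fin 6) = x := by rw [ha, this]
    rw [← h2]; rfl
  apply Matrix.det_eq_zero_of_row_eq_zero a
  intro j
  simp only [Matrix.of_apply]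
  rw [bV_apply, if_neg]
  intro he
  rw [hta] at he
  exact hxs (he ▸ sig_mem s j)

lemma eAlg_li : LinearIndependent ℂ eAlg := by
  rw [Fintype.linearIndependent_iff]
  intro g hg s
  have := congrArg (liftF (sig s)) hg
  rw [map_sum, map_zero] at this
  simp only [map_smul] at this
  rw [Finset.sum_eq_single s (fun t _ hts => by rw [liftF_eAlg_off (Ne.symm hts), smul_eq_mul, mul_zero])
    (fun hs => absurd (Finset.mem_univ s) hs)] at this
  rw [liftF_eAlg_diag, smul_eq_mul, mul_one] at this
  exact this

lemma eAlg_mem (s : I3) : eAlg s ∈ ⋀[ℂ]^3 (Fin 6 → ℂ) := by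
  rw [← ιMulti_span_fixedDegree]
  exact subset_span ⟨_, rfl⟩

lemma ιMulti3_mem_span (v : Fin 3 → (Fin 6 → ℂ)) :
    ιMulti ℂ 3 v ∈ span ℂ (Set.range eAlg) := by
  have hv1 : ∀ i, v i = ∑ j, v i j • bV j := by
    intro i; funext k
    simp [bV, Pi.basisFun_apply, Finset.sum_apply, Pi.single_apply]
  have hv : ιMulti ℂ 3 v = ιMulti ℂ 3 (fun i => ∑ j, v i j • bV j) := by
    congr 1; funext i; exact hv1 i
  rw [hv]
  have hms : (ιMulti ℂ 3 (M := Fin 6 → ℂ)).toMultilinearMap (fun i => ∑ j, v i j • bV j)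
      = ∑ r : Fin 3 → Fin 6, (ιMulti ℂ 3 (M := Fin 6 → ℂ)).toMultilinearMap
          (fun i => v i (r i) • bV (r i)) :=
    MultilinearMap.map_sum _ (fun i j => v i j • bV j)
  rw [show ιMulti ℂ 3 (fun i => ∑ j, v i j • bV j) = (ιMulti ℂ 3 (M := Fin 6 → ℂ)).toMultilinearMap
    (fun i => ∑ j, v i j • bV j) from rfl, hms]
  apply Submodule.sum_mem
  intro r _
  rw [MultilinearMap.map_smul_univ]
  apply Submodule.smul_mem
  show (ιMulti ℂ 3) (fun i => bV (r i)) ∈ span ℂ (Set.range eAlg)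
  by_cases hr : Function.Injective r
  · have hs : (Finset.image r Finset.univ).card = 3 := by
      rw [Finset.card_image_of_injective _ hr, Finset.card_univ, Fintype.card_fin]
    set s : I3 := ⟨Finset.image r Finset.univ, hs⟩ with hsdef
    have hmem : ∀ a, r a ∈ s.1 := fun a => Finset.mem_image_of_mem r (Finset.mem_univ a)
    set g : Fin 3 → Fin 3 := fun a => (s.1.orderIsoOfFin s.2).symm ⟨r a, hmem a⟩ with hg
    have hginj : Function.Injective g := by
      intro a a' h
      have h2 : (⟨r a, hmem a⟩ : {x // x ∈ s.1}) = ⟨r a', hmem a'⟩ :=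
        (s.1.orderIsoOfFin s.2).symm.injective h
      exact hr (congrArg Subtype.val h2)
    have hgbij := Finite.injective_iff_bijective.mp hginj
    set τ : Equiv.Perm (Fin 3) := Equiv.ofBijective g hgbij with hτ
    have hστ : ∀ a, sig s (τ a) = r a := by
      intro a
      have h1 : (s.1.orderIsoOfFin s.2) (g a) = ⟨r a, hmem a⟩ :=
        (s.1.orderIsoOfFin s.2).apply_symm_apply _
      have h2 : (↑((s.1.orderIsoOfFin s.2) (g a)) : Fin 6) = r a := by rw [h1]
      rw [← h2]; rfl
    have hcomp : (fun i => bV (r i)) = (fun i => bV (sig s i)) ∘ τ := by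
      funext a
      simp [Function.comp, hστ a]
    have key : ιMulti ℂ 3 (fun i => bV (r i)) = Equiv.Perm.sign τ • eAlg s := by
      rw [hcomp]
      exact (ιMulti ℂ 3 (M := Fin 6 → ℂ)).map_perm _ τ
    rw [key]
    exact Submodule.smul_mem _ _ (subset_span ⟨s, rfl⟩)
  · have : ¬ Function.Injective (fun i => bV (r i)) := by
      intro hinj
      exact hr (fun a a' haa => hinj (congrArg bV haa))
    rw [AlternatingMap.map_eq_zero_of_not_injective _ _ this]
    exact Submodule.zero_mem _

lemma span_eAlg : span ℂ (Set.range eAlg) = ⋀[ℂ]^3 (Fin 6 → ℂ) := by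
  apply le_antisymm
  · rw [span_le]
    rintro _ ⟨s, rfl⟩
    exact eAlg_mem s
  · rw [← ιMulti_span_fixedDegree, span_le]
    rintro _ ⟨v, rfl⟩
    exact ιMulti3_mem_span v

def e3 (s : I3) : (⋀[ℂ]^3 (Fin 6 → ℂ)) := ⟨eAlg s, eAlg_mem s⟩

lemma e3_li : LinearIndependent ℂ e3 := by
  have h : eAlg = (⋀[ℂ]^3 (Fin 6 → ℂ)).subtype ∘ e3 := rfl
  exact (h ▸ eAlg_li).of_comp _

lemma e3_span : ⊤ ≤ span ℂ (Set.range e3) := by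
  intro y _
  have hy : (y : ExteriorAlgebra ℂ (Fin 6 → ℂ)) ∈ span ℂ (Set.range eAlg) := by
    rw [span_eAlg]; exact y.2
  have hmap : Submodule.map (⋀[ℂ]^3 (Fin 6 → ℂ)).subtype (span ℂ (Set.range e3))
      = span ℂ (Set.range eAlg) := by
    rw [Submodule.map_span]
    congr 1
    rw [← Set.range_comp]
    rfl
  rw [← hmap] at hy
  obtain ⟨z, hz, hzy⟩ := hy
  have : z = y := Subtype.ext hzy
  exact this ▸ hz

def basis3 : Basis I3 ℂ (⋀[ℂ]^3 (Fin 6 → ℂ)) := Basis.mk e3_li e3_span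

lemma finrank_ext3 : finrank ℂ (⋀[ℂ]^3 (Fin 6 → ℂ)) = 20 := by
  rw [finrank_eq_card_basis basis3]
  rw [show Fintype.card I3 = _ from Fintype.card_finset_len 3]
  rw [Fintype.card_fin]
  decide
lemma ιMulti3_apply (u : Fin 3 → V) :
    ιMulti ℂ 3 u = ι ℂ (u 0) * ι ℂ (u 1) * ι ℂ (u 2) := by
  simp [ιMulti_apply, List.ofFn_succ, mul_assoc, Matrix.vecTail, Function.comp]

lemma ιMulti6_apply (w : Fin 6 → V) :
    ιMulti ℂ 6 w = ι ℂ (w 0) * ι ℂ (w 1) * ι ℂ (w 2) * (ι ℂ (w 3) * ι ℂ (w 4) * ι ℂ (w 5)) := by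
  simp [ιMulti_apply, List.ofFn_succ, mul_assoc, Matrix.vecTail, Function.comp]

lemma mul3_eq_ιMulti6 (u v : Fin 3 → V) :
    ιMulti ℂ 3 u * ιMulti ℂ 3 v =
      ιMulti ℂ 6 ![u 0, u 1, u 2, v 0, v 1, v 2] := by
  rw [ιMulti3_apply, ιMulti3_apply, ιMulti6_apply]
  rfl

-- block swap permutation
def blockswap : Equiv.Perm (Fin 6) := (finRotate 6) ^ 3

lemma blockswap_comp (u v : Fin 3 → V) :
    (![u 0, u 1, u 2, v 0, v 1, v 2] : Fin 6 → V) ∘ blockswap = ![v 0, v 1, v 2, u 0, u 1, u 2] := by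
  funext i
  fin_cases i <;> rfl

lemma sign_blockswap : Equiv.Perm.sign blockswap = -1 := by decide

lemma mul3_anticomm (u v : Fin 3 → V) :
    ιMulti ℂ 3 u * ιMulti ℂ 3 v = - (ιMulti ℂ 3 v * ιMulti ℂ 3 u) := by
  rw [mul3_eq_ιMulti6, mul3_eq_ιMulti6]
  have := (ιMulti ℂ 6 (M := V)).map_perm ![v 0, v 1, v 2, u 0, u 1, u 2] blockswap
  rw [blockswap_comp v u] at this  -- careful direction
  rw [this, sign_blockswap]
  simp


lemma ιMulti_ne_zero_of_li (v : Fin 6 → (Fin 6 → ℂ)) (h : LinearIndependent ℂ v) :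
    ιMulti ℂ 6 v ≠ 0 := by
  intro h0
  have h1 : liftF id (ιMulti ℂ 6 v) = 0 := by rw [h0, map_zero]
  rw [liftF_apply] at h1
  have hsp : span ℂ (Set.range v) = ⊤ :=
    h.span_eq_top_of_card_eq_finrank (by simp [Module.finrank_pi])
  have h2 : IsUnit ((Pi.basisFun ℂ (Fin 6)).det v) := (Basis.is_basis_iff_det _).mp ⟨h, hsp⟩
  have h3 : (Pi.basisFun ℂ (Fin 6)).det v = Matrix.det (Matrix.of (fun a b => v a (id b))) := by
    rw [Pi.basisFun_det]; rfl
  rw [h3, h1] at h2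
  exact (not_isUnit_zero h2 : False)

lemma ιMulti_eq_zero_of_dep {k : ℕ} (v : Fin k → (Fin 6 → ℂ)) (h : ¬ LinearIndependent ℂ v) :
    ιMulti ℂ k v = 0 :=
  AlternatingMap.map_linearDependent (ιMulti ℂ k) v h

-- six vectors in a small subspace are dependent
lemma dep_of_low {p : Submodule ℂ (Fin 6 → ℂ)} (hp : finrank ℂ p ≤ 5)
    (w : Fin 6 → (Fin 6 → ℂ)) (hw : ∀ i, w i ∈ p) : ¬ LinearIndependent ℂ w := by
  intro h
  have h1 : finrank ℂ (span ℂ (Set.range w)) = 6 := by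
    rw [finrank_span_eq_card h, Fintype.card_fin]
  have h2 : span ℂ (Set.range w) ≤ p := span_le.mpr (by rintro _ ⟨i, rfl⟩; exact hw i)
  have := Submodule.finrank_mono h2
  omega

lemma li_append {u v : Fin 3 → (Fin 6 → ℂ)} (hu : LinearIndependent ℂ u)
    (hv : LinearIndependent ℂ v)
    (hd : Disjoint (span ℂ (Set.range u)) (span ℂ (Set.range v))) :
    LinearIndependent ℂ (![u 0, u 1, u 2, v 0, v 1, v 2] : Fin 6 → (Fin 6 → ℂ)) := by
  have hsum : LinearIndependent ℂ (Sum.elim u v) := hu.sum_type hv hd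
  have h2 : LinearIndependent ℂ (Sum.elim u v ∘ finSumFinEquiv.symm) :=
    hsum.comp _ finSumFinEquiv.symm.injective
  have : (![u 0, u 1, u 2, v 0, v 1, v 2] : Fin 6 → (Fin 6 → ℂ))
      = Sum.elim u v ∘ finSumFinEquiv.symm := by
    funext i
    fin_cases i <;> rfl
  rw [this]
  exact h2

def compl3 (s : I3) : I3 := ⟨s.1ᶜ, by rw [Finset.card_compl, s.2]; rfl⟩

lemma sig_range (s : I3) : Set.range (sig s) = ↑s.1 := Finset.range_orderEmbOfFin _ _

lemma eAlg_mul_zero {s t : I3} {x : Fin 6} (hxs : x ∈ s.1) (hxt : x ∈ t.1) :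
    eAlg s * eAlg t = 0 := by
  rw [eAlg, eAlg, mul3_eq_ιMulti6]
  apply ιMulti_eq_zero_of_dep
  apply dep_of_low (p := span ℂ (bV '' ↑(s.1 ∪ t.1)))
  · have hcard : (s.1 ∪ t.1).card ≤ 5 := by
      have h1 := Finset.card_union_add_card_inter s.1 t.1
      have h2 : 0 < (s.1 ∩ t.1).card := Finset.card_pos.mpr ⟨x, Finset.mem_inter.mpr ⟨hxs, hxt⟩⟩
      rw [s.2, t.2] at h1
      omega
    calc finrank ℂ (span ℂ (bV '' ↑(s.1 ∪ t.1)))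
        ≤ (bV '' ↑(s.1 ∪ t.1)).toFinset.card := finrank_span_le_card _
      _ ≤ 5 := by
          rw [Set.toFinset_image]
          refine le_trans (Finset.card_image_le) (le_trans (le_of_eq ?_) hcard)
          congr 1
          exact Finset.toFinset_coe _
  · intro i
    fin_cases i <;> exact subset_span ⟨_, by
      simp only [Finset.coe_union, Set.mem_union, Finset.mem_coe]
      first
        | exact Or.inl (sig_mem _ _)
        | exact Or.inr (sig_mem _ _), rfl⟩

lemma bV_li_of : ∀ (s : I3), LinearIndependent ℂ (fun i => bV (sig s i)) := by
  intro s
  exact bV.linearIndependent.comp (sig s) (sig_inj s)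

lemma eAlg_mul_compl_ne (s : I3) : eAlg s * eAlg (compl3 s) ≠ 0 := by
  rw [eAlg, eAlg, mul3_eq_ιMulti6]
  apply ιMulti_ne_zero_of_li
  apply li_append (bV_li_of s) (bV_li_of (compl3 s))
  have hr : ∀ t : I3, Set.range (fun i => bV (sig t i)) = bV '' ↑t.1 := by
    intro t
    rw [show (fun i => bV (sig t i)) = bV ∘ (sig t) from rfl, Set.range_comp, sig_range]
  rw [hr s, hr (compl3 s)]
  apply bV.linearIndependent.disjoint_span_image
  show Disjoint (↑s.1) ((↑s.1ᶜ : Finset (Fin 6)) : Set (Fin 6))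
  rw [Finset.disjoint_coe]
  exact disjoint_compl_right


-- the bilinear form
def mulSix : (⋀[ℂ]^3 (Fin 6 → ℂ)) →ₗ[ℂ] (⋀[ℂ]^3 (Fin 6 → ℂ)) →ₗ[ℂ] (⋀[ℂ]^6 (Fin 6 → ℂ)) :=
  LinearMap.mk₂ ℂ (fun α β => ⟨(α : ExteriorAlgebra ℂ (Fin 6 → ℂ)) * β, mul_mem_six α β⟩)
    (fun x y z => Subtype.ext (by simp [add_mul]))
    (fun c x y => Subtype.ext (by simp [smul_mul_assoc]))
    (fun x y z => Subtype.ext (by simp [mul_add]))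
    (fun c x y => Subtype.ext (by simp [mul_smul_comm]))

def Bf (vol : (⋀[ℂ]^6 (Fin 6 → ℂ)) ≃ₗ[ℂ] ℂ) :
    LinearMap.BilinForm ℂ (⋀[ℂ]^3 (Fin 6 → ℂ)) :=
  mulSix.compr₂ vol.toLinearMap

lemma Bf_apply (vol : (⋀[ℂ]^6 (Fin 6 → ℂ)) ≃ₗ[ℂ] ℂ) (α β : ⋀[ℂ]^3 (Fin 6 → ℂ)) :
    Bf vol α β = symForm vol α β := rfl

-- anticommutativity on degree 3
lemma mul_anticomm3 {x y : ExteriorAlgebra ℂ (Fin 6 → ℂ)}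
    (hx : x ∈ ⋀[ℂ]^3 (Fin 6 → ℂ)) (hy : y ∈ ⋀[ℂ]^3 (Fin 6 → ℂ)) : x * y = -(y * x) := by
  rw [← ιMulti_span_fixedDegree] at hx hy
  induction hy using Submodule.span_induction with
  | mem y hym =>
    induction hx using Submodule.span_induction with
    | mem x hxm =>
      obtain ⟨u, rfl⟩ := hxm
      obtain ⟨v, rfl⟩ := hym
      exact mul3_anticomm u v
    | zero => simp
    | add a b _ _ ha hb => rw [add_mul, mul_add, ha, hb, neg_add]
    | smul c a _ ha => rw [smul_mul_assoc, mul_smul_comm, ha, smul_neg]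
  | zero => simp
  | add a b _ _ ha hb => rw [mul_add, add_mul, ha, hb, neg_add]
  | smul c a _ ha => rw [mul_smul_comm, smul_mul_assoc, ha, smul_neg]

lemma Bf_isAlt (vol : (⋀[ℂ]^6 (Fin 6 → ℂ)) ≃ₗ[ℂ] ℂ) : (Bf vol).IsAlt := by
  intro α
  have h := mul_anticomm3 α.2 α.2
  have h2 : (α : ExteriorAlgebra ℂ (Fin 6 → ℂ)) * α = 0 := by
    have h3 : (α : ExteriorAlgebra ℂ (Fin 6 → ℂ)) * α + α * α = 0 := by
      nth_rewrite 1 [h]; simp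
    have h4 : (2 : ℂ) • ((α : ExteriorAlgebra ℂ (Fin 6 → ℂ)) * α) = 0 := by
      rw [two_smul]; exact h3
    simpa using (smul_eq_zero.mp h4).resolve_left (by norm_num)
  show vol ⟨(α : ExteriorAlgebra ℂ (Fin 6 → ℂ)) * α, _⟩ = 0
  rw [show (⟨(α : ExteriorAlgebra ℂ (Fin 6 → ℂ)) * α, mul_mem_six α α⟩ :
    ⋀[ℂ]^6 (Fin 6 → ℂ)) = 0 from Subtype.ext h2, vol.map_zero]

lemma Bf_e3 (vol : (⋀[ℂ]^6 (Fin 6 → ℂ)) ≃ₗ[ℂ] ℂ) (s t : I3) :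
    Bf vol (e3 s) (e3 t) = vol ⟨eAlg s * eAlg t, mul_mem_six (e3 s) (e3 t)⟩ := rfl

lemma Bf_nondeg (vol : (⋀[ℂ]^6 (Fin 6 → ℂ)) ≃ₗ[ℂ] ℂ) : (Bf vol).Nondegenerate := by
  suffices hL : LinearMap.SeparatingLeft (Bf vol) from
    ⟨hL, fun y hy => hL y (fun x => (Bf_isAlt vol).isRefl _ _ (hy x))⟩
  intro α hα
  by_contra hne
  have hrepr : basis3.repr α ≠ 0 := fun h => hne (by
    have := congrArg basis3.repr.symm h
    simpa using this)
  obtain ⟨s₀, hs₀⟩ := Finsupp.ne_iff.mp hrepr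
  simp only [Finsupp.coe_zero, Pi.zero_apply] at hs₀
  have hb3 : ∀ s, basis3 s = e3 s := fun s => by rw [basis3, Basis.mk_apply]
  have hsum : α = ∑ s : I3, basis3.repr α s • e3 s := by
    simp_rw [← hb3]
    exact (basis3.sum_repr α).symm
  have hval := hα (e3 (compl3 s₀))
  rw [hsum] at hval
  rw [map_sum, LinearMap.sum_apply] at hval
  have hterm : ∀ s : I3, s ≠ s₀ →
      (Bf vol (basis3.repr α s • e3 s)) (e3 (compl3 s₀)) = 0 := by
    intro s hs
    have hnsub : ¬ s.1 ⊆ s₀.1 := by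
      intro hsub
      exact hs (Subtype.ext (Finset.eq_of_subset_of_card_le hsub (by rw [s.2, s₀.2])))
    obtain ⟨x, hxs, hxns⟩ := Finset.not_subset.mp hnsub
    have hxc : x ∈ (compl3 s₀).1 := Finset.mem_compl.mpr hxns
    rw [map_smul, LinearMap.smul_apply, Bf_e3]
    erw [show (⟨eAlg s * eAlg (compl3 s₀), _⟩ : ⋀[ℂ]^6 (Fin 6 → ℂ)) = 0 from
      Subtype.ext (eAlg_mul_zero hxs hxc), vol.map_zero, smul_zero]
  rw [Finset.sum_eq_single s₀ (fun s _ hs => hterm s hs)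
    (fun h => absurd (Finset.mem_univ s₀) h)] at hval
  rw [map_smul, LinearMap.smul_apply, Bf_e3] at hval
  have hnz : vol ⟨eAlg s₀ * eAlg (compl3 s₀), mul_mem_six (e3 s₀) (e3 (compl3 s₀))⟩ ≠ 0 := by
    intro h0
    have := vol.injective (by rw [h0, vol.map_zero] : vol _ = vol 0)
    exact eAlg_mul_compl_ne s₀ (congrArg Subtype.val this)
  rw [smul_eq_mul] at hval
  exact hs₀ (by
    rcases mul_eq_zero.mp hval with h | h
    · exact h
    · exact absurd h hnz)

instance : FiniteDimensional ℂ (⋀[ℂ]^3 (Fin 6 → ℂ)) := Module.Finite.of_basis basis3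

lemma isotropic_span {M : Type*} [AddCommGroup M] [Module ℂ M]
    (B : LinearMap.BilinForm ℂ M) (G : Set M) (hG : ∀ x ∈ G, ∀ y ∈ G, B x y = 0) :
    ∀ x ∈ span ℂ G, ∀ y ∈ span ℂ G, B x y = 0 := by
  intro x hx y hy
  induction hy using Submodule.span_induction with
  | mem y hym =>
    induction hx using Submodule.span_induction with
    | mem x hxm => exact hG x hxm y hym
    | zero => simp
    | add a b _ _ ha hb => rw [map_add, LinearMap.add_apply, ha, hb, add_zero]
    | smul c a _ ha => rw [map_smul, LinearMap.smul_apply, ha, smul_zero]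
  | zero => simp
  | add a b _ _ ha hb => rw [map_add, ha, hb, add_zero]
  | smul c a _ ha => rw [map_smul, ha, smul_zero]

lemma ext_step (vol : (⋀[ℂ]^6 (Fin 6 → ℂ)) ≃ₗ[ℂ] ℂ) (A₀ : Submodule ℂ (⋀[ℂ]^3 (Fin 6 → ℂ)))
    (h₀ : ∀ x ∈ A₀, ∀ y ∈ A₀, Bf vol x y = 0) (hlt : finrank ℂ A₀ < 10) :
    ∃ A₁ : Submodule ℂ (⋀[ℂ]^3 (Fin 6 → ℂ)), A₀ ≤ A₁ ∧
      (∀ x ∈ A₁, ∀ y ∈ A₁, Bf vol x y = 0) ∧ finrank ℂ A₁ = finrank ℂ A₀ + 1 := by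
  have hrefl := (Bf_isAlt vol).isRefl
  have horth := LinearMap.BilinForm.finrank_orthogonal (Bf_nondeg vol) A₀
  rw [finrank_ext3] at horth
  have hle : A₀ ≤ (Bf vol).orthogonal A₀ := fun x hx =>
    LinearMap.BilinForm.mem_orthogonal_iff.mpr (fun n hn => h₀ n hn x hx)
  have hfrle : finrank ℂ A₀ ≤ 20 := finrank_ext3 ▸ Submodule.finrank_le A₀
  have hne : A₀ ≠ (Bf vol).orthogonal A₀ := fun h => by rw [← h] at horth; omega
  obtain ⟨x, hxo, hxn⟩ := SetLike.exists_of_lt (lt_of_le_of_ne hle hne)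
  have hx0 : x ≠ 0 := fun h => hxn (h ▸ A₀.zero_mem)
  refine ⟨A₀ ⊔ span ℂ {x}, le_sup_left, ?_, ?_⟩
  · intro a ha b hb
    obtain ⟨y, hy, z, hz, rfl⟩ := Submodule.mem_sup.mp ha
    obtain ⟨y', hy', z', hz', rfl⟩ := Submodule.mem_sup.mp hb
    obtain ⟨c, rfl⟩ := Submodule.mem_span_singleton.mp hz
    obtain ⟨c', rfl⟩ := Submodule.mem_span_singleton.mp hz'
    have hyx : Bf vol y x = 0 := LinearMap.BilinForm.mem_orthogonal_iff.mp hxo y hy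
    have hxy' : Bf vol x y' = 0 := hrefl _ _ (LinearMap.BilinForm.mem_orthogonal_iff.mp hxo y' hy')
    have hxx : Bf vol x x = 0 := Bf_isAlt vol x
    simp only [map_add, map_smul, LinearMap.add_apply, LinearMap.smul_apply,
      h₀ y hy y' hy', hyx, hxy', hxx, smul_zero, add_zero, zero_add]
  · have hinf : A₀ ⊓ span ℂ {x} = ⊥ := by
      rw [eq_bot_iff]
      rintro v ⟨hv1, hv2⟩
      obtain ⟨c, rfl⟩ := Submodule.mem_span_singleton.mp hv2
      rcases eq_or_ne c 0 with rfl | hc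
      · simp
      · have hxA : x ∈ A₀ := by
          have h5 := A₀.smul_mem c⁻¹ hv1
          rwa [smul_smul, inv_mul_cancel₀ hc, one_smul] at h5
        exact absurd hxA hxn
    have := Submodule.finrank_sup_add_finrank_inf_eq A₀ (span ℂ {x})
    rw [hinf, finrank_bot, finrank_span_singleton hx0] at this
    omega

lemma exists_lagrangian (vol : (⋀[ℂ]^6 (Fin 6 → ℂ)) ≃ₗ[ℂ] ℂ)
    (A₀ : Submodule ℂ (⋀[ℂ]^3 (Fin 6 → ℂ)))
    (h₀ : ∀ x ∈ A₀, ∀ y ∈ A₀, Bf vol x y = 0) :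
    ∃ A : Submodule ℂ (⋀[ℂ]^3 (Fin 6 → ℂ)), A₀ ≤ A ∧
      (∀ x ∈ A, ∀ y ∈ A, Bf vol x y = 0) ∧ finrank ℂ A = 10 := by
  have hrefl := (Bf_isAlt vol).isRefl
  have hbound : ∀ (A : Submodule ℂ (⋀[ℂ]^3 (Fin 6 → ℂ))),
      (∀ x ∈ A, ∀ y ∈ A, Bf vol x y = 0) → finrank ℂ A ≤ 10 := by
    intro A hA
    have horth := LinearMap.BilinForm.finrank_orthogonal (Bf_nondeg vol) A
    rw [finrank_ext3] at horth
    have hle : A ≤ (Bf vol).orthogonal A := fun x hx =>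
      LinearMap.BilinForm.mem_orthogonal_iff.mpr (fun n hn => hA n hn x hx)
    have := Submodule.finrank_mono hle
    have hfrle : finrank ℂ A ≤ 20 := finrank_ext3 ▸ Submodule.finrank_le A
    omega
  -- induction on 10 - finrank A₀
  obtain ⟨n, hn⟩ : ∃ n, n = 10 - finrank ℂ A₀ := ⟨_, rfl⟩
  induction n generalizing A₀ with
  | zero =>
    have : finrank ℂ A₀ = 10 := by have := hbound A₀ h₀; omega
    exact ⟨A₀, le_refl _, h₀, this⟩
  | succ n ih =>
    rcases eq_or_lt_of_le (hbound A₀ h₀) with heq | hlt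
    · exact ⟨A₀, le_refl _, h₀, heq⟩
    · obtain ⟨A₁, hle, h₁, hfr⟩ := ext_step vol A₀ h₀ hlt
      obtain ⟨A, hA₁, hA, hfrA⟩ := ih A₁ h₁ (by omega)
      exact ⟨A, le_trans hle hA₁, hA, hfrA⟩

lemma wedge3_coe (u₁ u₂ u₃ : Fin 6 → ℂ) :
    ((wedge3 u₁ u₂ u₃ : ⋀[ℂ]^3 (Fin 6 → ℂ)) : ExteriorAlgebra ℂ (Fin 6 → ℂ))
      = ιMulti ℂ 3 ![u₁, u₂, u₃] := by
  rw [ιMulti3_apply]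
  rfl

lemma wedge3_mul (u₁ u₂ u₃ v₁ v₂ v₃ : Fin 6 → ℂ) :
    ((wedge3 u₁ u₂ u₃ : ⋀[ℂ]^3 (Fin 6 → ℂ)) : ExteriorAlgebra ℂ (Fin 6 → ℂ)) *
      ((wedge3 v₁ v₂ v₃ : ⋀[ℂ]^3 (Fin 6 → ℂ)) : ExteriorAlgebra ℂ (Fin 6 → ℂ))
      = ιMulti ℂ 6 ![u₁, u₂, u₃, v₁, v₂, v₃] := by
  rw [wedge3_coe, wedge3_coe, mul3_eq_ιMulti6]
  congr 1


/-- **O'Grady, Claim 2.3 (first half).** If `T` is a complete family of pairwise incident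
planes in `ℂ⁶`, then there is a Lagrangian subspace `A ⊆ ⋀³ℂ⁶` (isotropic of dimension `10`)
with `Θ_A = T`. -/
theorem complete_family_eq_theta_of_lagrangian
    (vol : (⋀[ℂ]^6 (Fin 6 → ℂ)) ≃ₗ[ℂ] ℂ)
    (T : Set (Submodule ℂ (Fin 6 → ℂ)))
    (hplane : ∀ W ∈ T, finrank ℂ W = 3)
    (hpair : ∀ W ∈ T, ∀ W' ∈ T, W ⊓ W' ≠ ⊥)
    (hcomplete : ∀ W : Submodule ℂ (Fin 6 → ℂ), finrank ℂ W = 3 →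
      (∀ W' ∈ T, W ⊓ W' ≠ ⊥) → W ∈ T) :
    ∃ A : Submodule ℂ (⋀[ℂ]^3 (Fin 6 → ℂ)),
      (∀ α ∈ A, ∀ β ∈ A, symForm vol α β = 0) ∧ finrank ℂ A = 10 ∧ Theta A = T := by
  classical
  set G : Set (⋀[ℂ]^3 (Fin 6 → ℂ)) :=
    {x | ∃ W ∈ T, ∃ w₁ ∈ W, ∃ w₂ ∈ W, ∃ w₃ ∈ W, wedge3 w₁ w₂ w₃ = x} with hGdef
  -- pairwise vanishing on G
  have hG : ∀ x ∈ G, ∀ y ∈ G, Bf vol x y = 0 := by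
    rintro x ⟨W, hW, u₁, hu₁, u₂, hu₂, u₃, hu₃, rfl⟩ y ⟨W', hW', v₁, hv₁, v₂, hv₂, v₃, hv₃, rfl⟩
    have hsupfr : finrank ℂ (W ⊔ W' : Submodule ℂ (Fin 6 → ℂ)) ≤ 5 := by
      have h1 := Submodule.finrank_sup_add_finrank_inf_eq W W'
      rw [hplane W hW, hplane W' hW'] at h1
      have h2 : 0 < finrank ℂ (W ⊓ W' : Submodule ℂ (Fin 6 → ℂ)) :=
        Module.finrank_pos_iff.mpr (Submodule.nontrivial_iff_ne_bot.mpr (hpair W hW W' hW'))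
      omega
    have hdep : ¬ LinearIndependent ℂ (![u₁, u₂, u₃, v₁, v₂, v₃] : Fin 6 → (Fin 6 → ℂ)) := by
      apply dep_of_low hsupfr
      intro i
      fin_cases i
      · exact Submodule.mem_sup_left hu₁
      · exact Submodule.mem_sup_left hu₂
      · exact Submodule.mem_sup_left hu₃
      · exact Submodule.mem_sup_right hv₁
      · exact Submodule.mem_sup_right hv₂
      · exact Submodule.mem_sup_right hv₃
    have hzero : ((wedge3 u₁ u₂ u₃ : ⋀[ℂ]^3 (Fin 6 → ℂ)) : ExteriorAlgebra ℂ (Fin 6 → ℂ)) *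
        ((wedge3 v₁ v₂ v₃ : ⋀[ℂ]^3 (Fin 6 → ℂ)) : ExteriorAlgebra ℂ (Fin 6 → ℂ)) = 0 := by
      rw [wedge3_mul]
      exact ιMulti_eq_zero_of_dep _ hdep
    show vol ⟨_, _⟩ = 0
    rw [show (⟨_, mul_mem_six (wedge3 u₁ u₂ u₃) (wedge3 v₁ v₂ v₃)⟩ : ⋀[ℂ]^6 (Fin 6 → ℂ)) = 0 from
      Subtype.ext hzero, vol.map_zero]
  have h₀ := isotropic_span (Bf vol) G hG
  obtain ⟨A, hle, hiso, hfr⟩ := exists_lagrangian vol (span ℂ G) h₀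
  refine ⟨A, fun α hα β hβ => hiso α hα β hβ, hfr, ?_⟩
  ext W
  constructor
  · rintro ⟨hW3, hWA⟩
    apply hcomplete W hW3
    intro W' hW'
    intro hbot
    -- six independent vectors
    set bW := finBasisOfFinrankEq ℂ W hW3 with hbW
    set bW' := finBasisOfFinrankEq ℂ W' (hplane W' hW') with hbW'
    set u : Fin 3 → (Fin 6 → ℂ) := fun i => (bW i : Fin 6 → ℂ) with hu
    set v : Fin 3 → (Fin 6 → ℂ) := fun i => (bW' i : Fin 6 → ℂ) with hv
    have hu_li : LinearIndependent ℂ u :=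
      bW.linearIndependent.map' W.subtype (Submodule.ker_subtype W)
    have hv_li : LinearIndependent ℂ v :=
      bW'.linearIndependent.map' W'.subtype (Submodule.ker_subtype W')
    have hspan_u : span ℂ (Set.range u) = W := by
      rw [hu, show (fun i => (bW i : Fin 6 → ℂ)) = W.subtype ∘ bW from rfl, Set.range_comp,
        ← Submodule.map_span, bW.span_eq, Submodule.map_subtype_top]
    have hspan_v : span ℂ (Set.range v) = W' := by
      rw [hv, show (fun i => (bW' i : Fin 6 → ℂ)) = W'.subtype ∘ bW' from rfl, Set.range_comp,
        ← Submodule.map_span, bW'.span_eq, Submodule.map_subtype_top]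
    have hli6 : LinearIndependent ℂ (![u 0, u 1, u 2, v 0, v 1, v 2] : Fin 6 → (Fin 6 → ℂ)) := by
      apply li_append hu_li hv_li
      rw [hspan_u, hspan_v, disjoint_iff]
      exact hbot
    have hmemA1 : wedge3 (u 0) (u 1) (u 2) ∈ A :=
      hWA (u 0) (bW 0).2 (u 1) (bW 1).2 (u 2) (bW 2).2
    have hmemA2 : wedge3 (v 0) (v 1) (v 2) ∈ A := by
      apply hle
      apply subset_span
      exact ⟨W', hW', v 0, (bW' 0).2, v 1, (bW' 1).2, v 2, (bW' 2).2, rfl⟩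
    have hBzero := hiso _ hmemA1 _ hmemA2
    have hprod : ((wedge3 (u 0) (u 1) (u 2) : ⋀[ℂ]^3 (Fin 6 → ℂ)) :
        ExteriorAlgebra ℂ (Fin 6 → ℂ)) * (wedge3 (v 0) (v 1) (v 2) :
        ⋀[ℂ]^3 (Fin 6 → ℂ)) = 0 := by
      have : (⟨_, mul_mem_six (wedge3 (u 0) (u 1) (u 2)) (wedge3 (v 0) (v 1) (v 2))⟩ :
          ⋀[ℂ]^6 (Fin 6 → ℂ)) = 0 := vol.injective (by rw [vol.map_zero]; exact hBzero)
      exact congrArg Subtype.val this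
    rw [wedge3_mul] at hprod
    exact ιMulti_ne_zero_of_li _ hli6 hprod
  · intro hW
    refine ⟨hplane W hW, fun w₁ h₁ w₂ h₂ w₃ h₃ => ?_⟩
    exact hle (subset_span ⟨W, hW, w₁, h₁, w₂, h₂, w₃, h₃, rfl⟩)
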